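/- arXiv:1802.04789 — 3 statements merged into one kernel-verified Lean document; each statement's English description precedes it below -/
import Mathlib

section
/- Let a_1 ≤ a_2 ≤ ... ≤ a_n be a sorted finite sequence of natural numbers, let x ∈ ℕ satisfy a_i ≤ x for all i, and let k divide n. Then there is a partition of the index set [n] into k sets A_1, ..., A_k, each of size n/k, such that for every j, the sum of a_i over i ∈ A_j is at most (∑_{i=1}^n a_i)/k + x. -/
lemma aux_stride (b : ℕ → ℕ) (hb : Monotone b) (k : ℕ) :
    ∀ m j, ∑ ℓ ∈ Finset.range m, k * b (j + ℓ * k) ≤ ∑ t ∈ Finset.Ico j (m * k + j), b t := by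
  intro m
  induction m with
  | zero => intro j; simp
  | succ m ih =>
    intro j
    rw [Finset.sum_range_succ]
    have hsplit : ∑ t ∈ Finset.Ico j ((m + 1) * k + j), b t
        = ∑ t ∈ Finset.Ico j (m * k + j), b t + ∑ t ∈ Finset.Ico (m * k + j) ((m + 1) * k + j), b t := by
      rw [Finset.sum_Ico_consecutive]
      · omega
      · nlinarith
    rw [hsplit]
    have hlast : k * b (j + m * k) ≤ ∑ t ∈ Finset.Ico (m * k + j) ((m + 1) * k + j), b t := by
      have hcard : (Finset.Ico (m * k + j) ((m + 1) * k + j)).card = k := by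
        rw [Nat.card_Ico]; ring_nf; omega
      calc k * b (j + m * k) = (Finset.Ico (m * k + j) ((m + 1) * k + j)).card • b (j + m * k) := by
            rw [hcard, smul_eq_mul]
        _ ≤ ∑ t ∈ Finset.Ico (m * k + j) ((m + 1) * k + j), b t := by
            apply Finset.card_nsmul_le_sum
            intro t ht
            apply hb
            simp only [Finset.mem_Ico] at ht
            omega
    exact Nat.add_le_add (ih j) hlast

/-- Given a sorted sequence `a : Fin n → ℕ` with all values at most `x`, and `k`
dividing `n`, there is a partition of the index set `Fin n` into `k` classes
(fibers of `f`), each of size `n/k`, such that each class's sum is at most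
`(∑ a)/k + x` (stated multiplied through by `k`). -/
theorem stmt2 (n k x : ℕ) (hk : 0 < k) (hkn : k ∣ n)
    (a : Fin n → ℕ) (hsorted : Monotone a) (hx : ∀ i, a i ≤ x) :
    ∃ f : Fin n → Fin k,
      (∀ j : Fin k, (Finset.univ.filter (fun i => f i = j)).card = n / k) ∧
      (∀ j : Fin k,
        k * ∑ i ∈ Finset.univ.filter (fun i => f i = j), a i ≤ (∑ i, a i) + k * x) := by
  set m := n / k with hm
  have hmk : m * k = n := Nat.div_mul_cancel hkn
  set b : ℕ → ℕ := fun t => if h : t < n then a ⟨t, h⟩ else x with hb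
  have hbmono : Monotone b := by
    intro s t hst
    simp only [hb]
    by_cases hs : s < n
    · by_cases ht : t < n
      · simp only [dif_pos hs, dif_pos ht]
        exact hsorted hst
      · simp only [dif_pos hs, dif_neg ht]
        exact hx _
    · have ht : ¬ t < n := fun h => hs (lt_of_le_of_lt hst h)
      simp [dif_neg hs, dif_neg ht]
  have hbn : ∀ t, n ≤ t → b t = x := by
    intro t ht; simp only [hb]; rw [dif_neg (by omega)]
  have hlt : ∀ (j : Fin k) (ℓ : Fin m), (j : ℕ) + ℓ * k < n := by
    intro j ℓ
    have h1 : (ℓ : ℕ) + 1 ≤ m := ℓ.2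
    have h2 : (j : ℕ) < k := j.2
    nlinarith
  set g : Fin k → Fin m → Fin n := fun j ℓ => ⟨(j : ℕ) + ℓ * k, hlt j ℓ⟩ with hg
  have hginj : ∀ j, Function.Injective (g j) := by
    intro j ℓ ℓ' h
    simp only [hg, Fin.mk.injEq] at h
    have := hk
    ext
    exact Nat.eq_of_mul_eq_mul_right hk (by omega)
  set f : Fin n → Fin k := fun i => ⟨(i : ℕ) % k, Nat.mod_lt _ hk⟩ with hf
  have hfiber : ∀ j : Fin k,
      Finset.univ.filter (fun i => f i = j) = Finset.image (g j) Finset.univ := by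
    intro j
    ext i
    simp only [Finset.mem_filter, Finset.mem_univ, true_and, Finset.mem_image, hf, hg,
      Fin.ext_iff]
    constructor
    · intro h
      have hdiv : (i : ℕ) / k < m := by
        rw [Nat.div_lt_iff_lt_mul hk]
        have := i.2; omega
      refine ⟨⟨(i : ℕ) / k, hdiv⟩, ?_⟩
      simp only []
      rw [← h]
      exact (Nat.mod_add_div' i k).symm ▸ rfl
    · rintro ⟨ℓ, hℓ⟩
      rw [← hℓ]
      simp [Nat.add_mul_mod_self_right, Nat.mod_eq_of_lt j.2]
  refine ⟨f, ?_, ?_⟩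
  · intro j
    rw [hfiber j, Finset.card_image_of_injective _ (hginj j), Finset.card_univ, Fintype.card_fin]
  · intro j
    rw [hfiber j, Finset.sum_image (fun y _ z _ h => hginj j h)]
    have hsum_eq : ∑ ℓ : Fin m, a (g j ℓ) = ∑ ℓ ∈ Finset.range m, b ((j : ℕ) + ℓ * k) := by
      rw [← Fin.sum_univ_eq_sum_range (fun t => b ((j : ℕ) + t * k))]
      apply Finset.sum_congr rfl
      intro ℓ _
      simp only [hb, hg, dif_pos (hlt j ℓ)]
    rw [hsum_eq, Finset.mul_sum]
    have h1 : ∑ ℓ ∈ Finset.range m, k * b ((j : ℕ) + ℓ * k)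
        ≤ ∑ t ∈ Finset.Ico (j : ℕ) (m * k + (j : ℕ)), b t := aux_stride b hbmono k m j
    have htotal : ∑ t ∈ Finset.range n, b t = ∑ i, a i := by
      rw [← Fin.sum_univ_eq_sum_range (fun t => b t)]
      apply Finset.sum_congr rfl
      intro i _
      simp only [hb, dif_pos i.2]
    have h2 : ∑ t ∈ Finset.Ico (j : ℕ) (m * k + (j : ℕ)), b t ≤ (∑ i, a i) + k * x := by
      rw [show m * k + (j : ℕ) = n + (j : ℕ) by rw [hmk]]
      rcases Nat.eq_zero_or_pos n with hn | hn
      · subst hn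
        simp
      · have hkn' : k ≤ n := Nat.le_of_dvd hn hkn
        have hjn : (j : ℕ) ≤ n := le_trans (le_of_lt j.2) hkn'
        rw [← Finset.sum_Ico_consecutive _ hjn (Nat.le_add_right n (j : ℕ))]
        have hA : ∑ t ∈ Finset.Ico (j : ℕ) n, b t ≤ ∑ i, a i := by
          rw [← htotal]
          apply Finset.sum_le_sum_of_subset
          intro t ht
          simp only [Finset.mem_Ico] at ht
          simp only [Finset.mem_range]
          omega
        have hB : ∑ t ∈ Finset.Ico n (n + (j : ℕ)), b t ≤ k * x := by
          calc ∑ t ∈ Finset.Ico n (n + (j : ℕ)), b t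
              = ∑ t ∈ Finset.Ico n (n + (j : ℕ)), x := by
                apply Finset.sum_congr rfl
                intro t ht
                simp only [Finset.mem_Ico] at ht
                exact hbn t ht.1
            _ = (j : ℕ) * x := by rw [Finset.sum_const, Nat.card_Ico, smul_eq_mul]; congr 1; omega
            _ ≤ k * x := Nat.mul_le_mul_right x (le_of_lt j.2)
        omega
    exact le_trans h1 h2
end

section
/- Let S be an n×n matrix and suppose its rows are reordered (via a permutation σ obtained from the strided-partition claim applied to the sorted multiset of row nonzero-counts with bound x = n) so that the resulting matrix S' satisfies: for every i ∈ [a], the band S'_i consisting of rows (i−1)(n/a)+1 through i(n/a) has nz(S'_i) ≤ nz(S')/a + n. Formally: for any sequence of nonnegative integers r_1,...,r_n with r_v ≤ n for all v (the row nonzero counts) and any a dividing n, there exists a permutation σ of [n] such that for every i ∈ [a], ∑_{v=(i−1)(n/a)+1}^{i(n/a)} r_{σ(v)} ≤ (∑_{v=1}^n r_v)/a + n. -/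
open Finset

private lemma stmt14_aux_ind (a : ℕ) (ha : 0 < a) (t : ℕ → ℕ) (ht : Monotone t)
    (i : ℕ) (hi : i < a) :
    ∀ m : ℕ, 0 < m →
      a * ∑ k ∈ Finset.range m, t (k * a + i) ≤
        (∑ j ∈ Finset.Ico a (m * a), t j) + a * t ((m - 1) * a + i) := by
  intro m
  induction m with
  | zero => intro h; omega
  | succ m ih =>
    intro _
    rcases Nat.eq_zero_or_pos m with rfl | hm
    · simp
    have hstep : a * t ((m - 1) * a + i) ≤ ∑ j ∈ Finset.Ico (m * a) (m * a + a), t j := by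
      have hcard : (Finset.Ico (m * a) (m * a + a)).card = a := by
        rw [Nat.card_Ico]; omega
      have := Finset.card_nsmul_le_sum (Finset.Ico (m * a) (m * a + a)) t
        (t ((m - 1) * a + i)) ?_
      · simpa [hcard, smul_eq_mul] using this
      · intro x hx
        rw [Finset.mem_Ico] at hx
        apply ht
        have : (m - 1) * a + a ≤ m * a := by
          have : (m - 1) * a + a = (m - 1 + 1) * a := by ring
          rw [this]
          exact Nat.mul_le_mul_right a (by omega)
        omega
    have hma : (m + 1) * a = m * a + a := by ring
    have hIco : ∑ j ∈ Finset.Ico a ((m + 1) * a), t j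
        = (∑ j ∈ Finset.Ico a (m * a), t j) + ∑ j ∈ Finset.Ico (m * a) (m * a + a), t j := by
      rw [hma]
      rw [← Finset.sum_Ico_consecutive t
        (Nat.le_mul_of_pos_left a hm) (Nat.le_add_right (m * a) a)]
    rw [Finset.sum_range_succ, Nat.mul_add, hIco]
    have := ih hm
    simp only [Nat.add_sub_cancel]
    omega

private lemma stmt14_key (a n : ℕ) (ha : 0 < a) (t : ℕ → ℕ) (ht : Monotone t)
    (htn : ∀ j, t j ≤ n) (i : ℕ) (hi : i < a) (m : ℕ) :
    a * ∑ k ∈ Finset.range m, t (k * a + i) ≤ (∑ j ∈ Finset.range (m * a), t j) + a * n := by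
  rcases Nat.eq_zero_or_pos m with rfl | hm
  · simp
  have h1 := stmt14_aux_ind a ha t ht i hi m hm
  have h2 : ∑ j ∈ Finset.Ico a (m * a), t j ≤ ∑ j ∈ Finset.range (m * a), t j := by
    apply Finset.sum_le_sum_of_subset
    intro x hx
    rw [Finset.mem_Ico] at hx
    rw [Finset.mem_range]
    omega
  have h3 : a * t ((m - 1) * a + i) ≤ a * n := Nat.mul_le_mul_left a (htn _)
  omega

/-- The strided permutation: `v = i*m + k ↦ k*a + i`. -/
private def strideEquiv (n a m : ℕ) (ha : 0 < a) (hm : 0 < m) (hn : n = m * a) :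
    Equiv.Perm (Fin n) where
  toFun v := ⟨(v % m) * a + v / m, by
    have hv : (v : ℕ) < m * a := by rw [← hn]; exact v.isLt
    have h1 : (v : ℕ) % m < m := Nat.mod_lt _ hm
    have h2 : (v : ℕ) / m < a := Nat.div_lt_of_lt_mul hv
    calc (v : ℕ) % m * a + v / m < (v % m) * a + a := by omega
      _ = ((v : ℕ) % m + 1) * a := by ring
      _ ≤ m * a := Nat.mul_le_mul_right a (by omega)
      _ = n := hn.symm⟩
  invFun w := ⟨(w % a) * m + w / a, by
    have hv : (w : ℕ) < a * m := by rw [mul_comm] at hn; rw [← hn]; exact w.isLt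
    have h1 : (w : ℕ) % a < a := Nat.mod_lt _ ha
    have h2 : (w : ℕ) / a < m := Nat.div_lt_of_lt_mul hv
    calc (w : ℕ) % a * m + w / a < (w % a) * m + m := by omega
      _ = ((w : ℕ) % a + 1) * m := by ring
      _ ≤ a * m := Nat.mul_le_mul_right m (by omega)
      _ = n := by rw [mul_comm]; exact hn.symm⟩
  left_inv v := by
    have hv : (v : ℕ) < m * a := by rw [← hn]; exact v.isLt
    have h2 : (v : ℕ) / m < a := Nat.div_lt_of_lt_mul hv
    apply Fin.ext
    simp only
    have hmod : ((v : ℕ) % m * a + v / m) % a = v / m := by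
      rw [mul_comm ((v : ℕ) % m) a, Nat.mul_add_mod]
      exact Nat.mod_eq_of_lt h2
    have hdiv : ((v : ℕ) % m * a + v / m) / a = v % m := by
      rw [mul_comm ((v:ℕ) % m) a, Nat.mul_add_div ha, Nat.div_eq_of_lt h2]
      omega
    rw [hmod, hdiv]
    rw [mul_comm]
    exact Nat.div_add_mod _ _
  right_inv w := by
    have hv : (w : ℕ) < a * m := by rw [mul_comm] at hn; rw [← hn]; exact w.isLt
    have h2 : (w : ℕ) / a < m := Nat.div_lt_of_lt_mul hv
    apply Fin.ext
    simp only
    have hmod : ((w : ℕ) % a * m + w / a) % m = w / a := by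
      rw [mul_comm ((w : ℕ) % a) m, Nat.mul_add_mod]
      exact Nat.mod_eq_of_lt h2
    have hdiv : ((w : ℕ) % a * m + w / a) / m = w % a := by
      have hm' : 0 < m := hm
      rw [mul_comm ((w:ℕ) % a) m, Nat.mul_add_div hm', Nat.div_eq_of_lt h2]
      omega
    rw [hmod, hdiv]
    rw [mul_comm]
    exact Nat.div_add_mod _ _

/-- Row balancing: for any row nonzero-counts `r : Fin n → ℕ` with `r v ≤ n` for
all `v`, and any `a` dividing `n`, there is a permutation `σ` of `[n]` such that
every consecutive block of `n/a` reordered values sums to at most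
`(∑ r)/a + n` (stated multiplied through by `a`). -/
theorem stmt14 (n a : ℕ) (ha : 0 < a) (han : a ∣ n)
    (r : Fin n → ℕ) (hr : ∀ v, r v ≤ n) :
    ∃ σ : Equiv.Perm (Fin n),
      ∀ i : ℕ, i < a →
        a * ∑ v ∈ Finset.univ.filter
            (fun v : Fin n => i * (n / a) ≤ (v : ℕ) ∧ (v : ℕ) < (i + 1) * (n / a)),
          r (σ v) ≤ (∑ v, r v) + a * n := by
  rcases Nat.eq_zero_or_pos n with rfl | hn
  · exact ⟨1, fun i hi => by simp⟩
  set m := n / a with hm_def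
  have hn_eq : n = m * a := by
    rw [hm_def, Nat.div_mul_cancel han]
  have hm : 0 < m := Nat.div_pos (Nat.le_of_dvd hn han) ha
  set τ := strideEquiv n a m ha hm hn_eq with hτ
  set π := Tuple.sort r with hπ
  refine ⟨τ.trans π, ?_⟩
  intro i hi
  -- the extended sorted sequence
  set t : ℕ → ℕ := fun j => if h : j < n then r (π ⟨j, h⟩) else n with ht_def
  have hts : Monotone (r ∘ π) := Tuple.monotone_sort r
  have ht : Monotone t := by
    intro x y hxy
    simp only [ht_def]
    by_cases hx : x < n
    · by_cases hy : y < n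
      · rw [dif_pos hx, dif_pos hy]
        exact hts (show (⟨x, hx⟩ : Fin n) ≤ ⟨y, hy⟩ from hxy)
      · rw [dif_pos hx, dif_neg hy]
        exact hr _
    · have hy : ¬ y < n := by omega
      rw [dif_neg hx, dif_neg hy]
  have htn : ∀ j, t j ≤ n := by
    intro j
    simp only [ht_def]
    split
    · exact hr _
    · exact le_refl n
  -- convert block sum
  have hblock : ∑ v ∈ Finset.univ.filter
      (fun v : Fin n => i * m ≤ (v : ℕ) ∧ (v : ℕ) < (i + 1) * m),
      r ((τ.trans π) v) = ∑ k ∈ Finset.range m, t (k * a + i) := by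
    refine Finset.sum_bij' (fun (v : Fin n) _ => (v : ℕ) % m)
      (fun k hk => (⟨i * m + k, by
        rw [Finset.mem_range] at hk
        calc i * m + k < i * m + m := by omega
          _ = (i + 1) * m := by ring
          _ ≤ a * m := Nat.mul_le_mul_right m (by omega)
          _ = n := by rw [mul_comm]; exact hn_eq.symm⟩ : Fin n)) ?_ ?_ ?_ ?_ ?_
    · intro v hv
      rw [Finset.mem_filter] at hv
      rw [Finset.mem_range]
      exact Nat.mod_lt _ hm
    · intro k hk
      rw [Finset.mem_range] at hk
      rw [Finset.mem_filter]
      refine ⟨Finset.mem_univ _, ?_, ?_⟩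
      · simp
      · simp only
        calc i * m + k < i * m + m := by omega
          _ = (i + 1) * m := by ring
    · intro v hv
      rw [Finset.mem_filter] at hv
      obtain ⟨-, h1, h2⟩ := hv
      apply Fin.ext
      simp only
      have hdm : (v : ℕ) / m = i := by
        apply Nat.div_eq_of_lt_le h1
        simpa using h2
      have h3 := Nat.div_add_mod (v : ℕ) m
      rw [hdm] at h3
      rw [mul_comm i m]
      omega
    · intro k hk
      rw [Finset.mem_range] at hk
      simp only
      rw [mul_comm i m, Nat.mul_add_mod]
      exact Nat.mod_eq_of_lt hk
    · intro v hv
      rw [Finset.mem_filter] at hv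
      obtain ⟨-, h1, h2⟩ := hv
      have hdm : (v : ℕ) / m = i := by
        apply Nat.div_eq_of_lt_le h1
        simpa using h2
      have hτv : ((τ v : Fin n) : ℕ) = (v : ℕ) % m * a + (v : ℕ) / m := rfl
      have hlt : (v : ℕ) % m * a + i < n := by
        rw [← hdm, ← hτv]; exact (τ v).isLt
      have hfin : τ v = ⟨(v : ℕ) % m * a + i, hlt⟩ := by
        apply Fin.ext; rw [hτv, hdm]
      simp only [Equiv.trans_apply, ht_def]
      rw [dif_pos hlt]
      rw [hfin]
  rw [hm_def] at hblock ⊢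
  rw [hblock]
  have htotal : ∑ j ∈ Finset.range (m * a), t j = ∑ v, r v := by
    rw [← hn_eq, ← Fin.sum_univ_eq_sum_range]
    have h1 : ∀ v : Fin n, t (v : ℕ) = r (π v) := by
      intro v
      simp only [ht_def]
      rw [dif_pos v.isLt]
    rw [Finset.sum_congr rfl (fun v _ => h1 v)]
    exact Equiv.sum_comp π r
  rw [← htotal]
  exact stmt14_key a n ha t ht htn i hi m
end

section
/- Let S, T be n×n matrices that are sparsity-balanced with respect to an n-split pair (a,b), fix (i,j) ∈ [a]×[b], and for ℓ ∈ [n] define the page weight w_ℓ = nz(S_i[*][ℓ]) + nz(T_j[ℓ][*]) (nonzeros in column ℓ of the row-band S_i plus nonzeros in row ℓ of the column-band T_j). Then each w_ℓ ≤ 2n, hence (by the strided-partition claim with x = 2n and k = n/(ab)) there exists a partition of [n] into n/(ab) sets A_1, ..., A_{n/(ab)} of equal size ab such that for every k, ∑_{ℓ ∈ A_k} w_ℓ ≤ (ab/n)·∑_{ℓ∈[n]} w_ℓ + 2n. -/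
open Finset in
lemma strided_aux {n m K : ℕ} (hK : 0 < K) (hm : 0 < m) (hn : m * K = n)
    (w : Fin n → ℕ) (hwle : ∀ ℓ, w ℓ ≤ 2 * n) :
    ∃ f : Fin n → Fin K,
      (∀ k : Fin K, (univ.filter (fun ℓ => f ℓ = k)).card = m) ∧
      (∀ k : Fin K,
        K * ∑ ℓ ∈ univ.filter (fun ℓ => f ℓ = k), w ℓ ≤ (∑ ℓ, w ℓ) + 2 * n * K) := by
  have hn0 : 0 < n := hn ▸ Nat.mul_pos hm hK
  set σ := Tuple.sort w with hσ
  have hmono : Monotone (w ∘ σ) := Tuple.monotone_sort w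
  have hidx : ∀ t, t < m → ∀ c, c < K → t * K + c < n := by
    intro t ht c hc
    calc t * K + c < t * K + K := by omega
    _ = (t + 1) * K := by ring
    _ ≤ m * K := Nat.mul_le_mul_right K (by omega)
    _ = n := hn
  set P : ℕ → Fin n := fun x => ⟨x % n, Nat.mod_lt x hn0⟩ with hP
  have hPval : ∀ x, x < n → ((P x : ℕ) = x) := fun x hx => Nat.mod_eq_of_lt hx
  set f : Fin n → Fin K := fun ℓ => ⟨(σ.symm ℓ : ℕ) % K, Nat.mod_lt _ hK⟩ with hf
  -- translation from strided filter to range sum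
  have key : ∀ c, c < K → ∀ g : Fin n → ℕ,
      ∑ p ∈ univ.filter (fun p : Fin n => (p : ℕ) % K = c), g p
        = ∑ t ∈ range m, g (P (t * K + c)) := by
    intro c hc g
    refine Finset.sum_nbij' (fun p => (p : ℕ) / K) (fun t => P (t * K + c)) ?_ ?_ ?_ ?_ ?_
    · intro p hp
      simp only [mem_range]
      exact (Nat.div_lt_iff_lt_mul hK).2 (hn ▸ p.isLt)
    · intro t ht
      simp only [mem_range] at ht
      simp only [mem_filter, mem_univ, true_and]
      show (t * K + c) % n % K = c
      rw [Nat.mod_eq_of_lt (hidx t ht c hc), Nat.add_comm, Nat.add_mul_mod_self_right]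
      exact Nat.mod_eq_of_lt hc
    · intro p hp
      simp only [mem_filter, mem_univ, true_and] at hp
      have : (p : ℕ) / K * K + c = (p : ℕ) := by
        conv_rhs => rw [← Nat.div_add_mod (p : ℕ) K]
        rw [hp]; ring
      apply Fin.ext
      rw [hPval ((p : ℕ) / K * K + c) (by rw [this]; exact p.isLt), this]
    · intro t ht
      simp only [mem_range] at ht
      show (t * K + c) % n / K = t
      rw [Nat.mod_eq_of_lt (hidx t ht c hc),
        Nat.mul_comm t K, Nat.mul_add_div hK, Nat.div_eq_of_lt hc]
      omega
    · intro p hp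
      simp only [mem_filter, mem_univ, true_and] at hp
      congr 1
      have : (p : ℕ) / K * K + c = (p : ℕ) := by
        conv_rhs => rw [← Nat.div_add_mod (p : ℕ) K]
        rw [hp]; ring
      apply Fin.ext
      rw [hPval ((p : ℕ) / K * K + c) (by rw [this]; exact p.isLt), this]
  -- transfer fiber sums through σ
  have trans : ∀ (k : Fin K) (g : Fin n → ℕ),
      ∑ ℓ ∈ univ.filter (fun ℓ => f ℓ = k), g ℓ
        = ∑ p ∈ univ.filter (fun p : Fin n => (p : ℕ) % K = (k : ℕ)), g (σ p) := by
    intro k g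
    refine (Finset.sum_equiv σ ?_ ?_).symm
    · intro p
      simp only [mem_filter, mem_univ, true_and, hf, Fin.ext_iff,
        Equiv.symm_apply_apply]
    · intro p _; rfl
  -- strided sums
  set Ssum : ℕ → ℕ := fun c => ∑ t ∈ range m, w (σ (P (t * K + c))) with hS
  have fibsum : ∀ k : Fin K,
      ∑ ℓ ∈ univ.filter (fun ℓ => f ℓ = k), w ℓ = Ssum (k : ℕ) := by
    intro k
    rw [trans k w, key (k : ℕ) k.isLt (fun p => w (σ p))]
  have fibcard : ∀ k : Fin K, (univ.filter (fun ℓ => f ℓ = k)).card = m := by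
    intro k
    rw [Finset.card_eq_sum_ones, trans k (fun _ => 1),
      key (k : ℕ) k.isLt (fun _ => 1)]
    simp
  -- main inequality between strided sums
  have main : ∀ c, c < K → ∀ c', c' < K → Ssum c ≤ 2 * n + Ssum c' := by
    intro c hc c' hc'
    obtain ⟨m', rfl⟩ : ∃ m', m = m' + 1 := ⟨m - 1, by omega⟩
    have h1 : Ssum c = (∑ t ∈ range m', w (σ (P (t * K + c))))
        + w (σ (P (m' * K + c))) := Finset.sum_range_succ _ m'
    have h2 : w (σ (P (m' * K + c))) ≤ 2 * n := hwle _
    have h3 : ∑ t ∈ range m', w (σ (P (t * K + c)))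
        ≤ ∑ t ∈ range m', w (σ (P ((t + 1) * K + c'))) := by
      apply Finset.sum_le_sum
      intro t ht
      simp only [mem_range] at ht
      have hle : P (t * K + c) ≤ P ((t + 1) * K + c') := by
        rw [Fin.le_def, hPval _ (hidx t (by omega) c hc),
          hPval _ (hidx (t + 1) (by omega) c' hc')]
        nlinarith
      exact hmono hle
    have h4 : ∑ t ∈ range m', w (σ (P ((t + 1) * K + c'))) ≤ Ssum c' := by
      have := Finset.sum_range_succ' (fun t => w (σ (P (t * K + c')))) m'
      simp only [hS] at this ⊢
      omega
    omega
  refine ⟨f, fibcard, ?_⟩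
  intro k
  have htot : ∑ k' : Fin K, Ssum (k' : ℕ) = ∑ ℓ, w ℓ := by
    rw [← Finset.sum_fiberwise univ f w]
    exact Finset.sum_congr rfl fun k' _ => (fibsum k').symm
  have hbound : ∀ k' : Fin K, Ssum (k : ℕ) ≤ 2 * n + Ssum (k' : ℕ) :=
    fun k' => main _ k.isLt _ k'.isLt
  calc K * ∑ ℓ ∈ univ.filter (fun ℓ => f ℓ = k), w ℓ
      = ∑ _k' : Fin K, Ssum (k : ℕ) := by
        rw [fibsum k, Finset.sum_const, card_univ, Fintype.card_fin, smul_eq_mul]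
    _ ≤ ∑ k' : Fin K, (2 * n + Ssum (k' : ℕ)) := Finset.sum_le_sum fun k' _ => hbound k'
    _ = 2 * n * K + ∑ k' : Fin K, Ssum (k' : ℕ) := by
        rw [Finset.sum_add_distrib, Finset.sum_const, card_univ, Fintype.card_fin,
          smul_eq_mul, Nat.mul_comm]
    _ = (∑ ℓ, w ℓ) + 2 * n * K := by rw [htot]; ring


/-- Page-weight balancing: for matrices `S, T` that are sparsity-balanced w.r.t. an
`n`-split pair `(a,b)` and a fixed `(i,j) ∈ [a]×[b]`, the page weights
`w_ℓ = nz(S_i[*][ℓ]) + nz(T_j[ℓ][*])` all satisfy `w_ℓ ≤ 2n`, and there is a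
partition of `[n]` into `n/(ab)` classes of equal size `ab` (fibers of `f`) with
`∑_{ℓ ∈ A_k} w_ℓ ≤ (ab/n)·∑_ℓ w_ℓ + 2n` for every class (stated multiplied
through by `n`). -/
theorem stmt16 {n a b : ℕ} {R : Type*} [Zero R] [DecidableEq R]
    (S T : Matrix (Fin n) (Fin n) R)
    (ha1 : 1 ≤ a) (hb1 : 1 ≤ b) (hadvd : a ∣ n) (hbdvd : b ∣ n)
    (hab : a * b ∣ n) (hsplit : 1 ≤ n / (a * b))
    (i j : ℕ) (hi : i < a) (hj : j < b)
    (w : Fin n → ℕ)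
    (hw : ∀ ℓ : Fin n,
      w ℓ = (Finset.univ.filter (fun u : Fin n =>
              i * (n / a) ≤ (u : ℕ) ∧ (u : ℕ) < (i + 1) * (n / a) ∧ S u ℓ ≠ 0)).card
          + (Finset.univ.filter (fun v : Fin n =>
              j * (n / b) ≤ (v : ℕ) ∧ (v : ℕ) < (j + 1) * (n / b) ∧ T ℓ v ≠ 0)).card) :
    (∀ ℓ : Fin n, w ℓ ≤ 2 * n) ∧
    ∃ f : Fin n → Fin (n / (a * b)),
      (∀ k : Fin (n / (a * b)),
        (Finset.univ.filter (fun ℓ => f ℓ = k)).card = a * b) ∧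
      (∀ k : Fin (n / (a * b)),
        n * ∑ ℓ ∈ Finset.univ.filter (fun ℓ => f ℓ = k), w ℓ ≤
          a * b * (∑ ℓ, w ℓ) + 2 * n * n) := by

  have hwle : ∀ ℓ : Fin n, w ℓ ≤ 2 * n := by
    intro ℓ
    rw [hw ℓ]
    have h1 := Finset.card_filter_le (Finset.univ : Finset (Fin n))
      (fun u : Fin n => i * (n / a) ≤ (u : ℕ) ∧ (u : ℕ) < (i + 1) * (n / a) ∧ S u ℓ ≠ 0)
    have h2 := Finset.card_filter_le (Finset.univ : Finset (Fin n))
      (fun v : Fin n => j * (n / b) ≤ (v : ℕ) ∧ (v : ℕ) < (j + 1) * (n / b) ∧ T ℓ v ≠ 0)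
    simp only [Finset.card_univ, Fintype.card_fin] at h1 h2
    omega
  refine ⟨hwle, ?_⟩
  have hK : 0 < n / (a * b) := hsplit
  have hm : 0 < a * b := Nat.mul_pos ha1 hb1
  have hn : a * b * (n / (a * b)) = n := Nat.mul_div_cancel' hab
  obtain ⟨f, hcard, hsum⟩ := strided_aux hK hm hn w hwle
  refine ⟨f, hcard, ?_⟩
  intro k
  have h := hsum k
  calc n * ∑ ℓ ∈ Finset.univ.filter (fun ℓ => f ℓ = k), w ℓ
      = a * b * ((n / (a * b)) * ∑ ℓ ∈ Finset.univ.filter (fun ℓ => f ℓ = k), w ℓ) := by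
        rw [← Nat.mul_assoc, hn]
    _ ≤ a * b * ((∑ ℓ, w ℓ) + 2 * n * (n / (a * b))) := Nat.mul_le_mul_left _ h
    _ = a * b * (∑ ℓ, w ℓ) + 2 * n * (a * b * (n / (a * b))) := by ring
    _ = a * b * (∑ ℓ, w ℓ) + 2 * n * n := by rw [hn]
end
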